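/- Let m ∈ ℕ with m ≥ 1, let r := 4m + 2 and let n ∈ ℕ be divisible by 2r(r+1). Let G be the complete balanced (r+1)-partite graph on n vertices (so each vertex class has size n/(r+1) and δ(G) = (1 − 1/(r+1))n). Then there is a labelling f: E(G) → {−1,1} so that every perfect K_r-tiling 𝒯 in G has discrepancy zero, i.e. Σ_{e ∈ E(𝒯)} f(e) = 0. -/

import Mathlib

/-- A perfect `K_r`-tiling of a graph `G`: a collection of vertex-disjoint
copies of `K_r` (given as `r`-cliques) covering every vertex. -/
def IsPerfectKTiling {V : Type*} (G : SimpleGraph V) (r : ℕ)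
    (T : Finset (Finset V)) : Prop :=
  (∀ S ∈ T, G.IsNClique r S) ∧
  (T : Set (Finset V)).Pairwise (fun S S' => Disjoint S S') ∧
  (∀ v : V, ∃ S ∈ T, v ∈ S)

/-- The edge set `E(𝒯)` of a tiling: the union of the edge sets of its cliques. -/
def tilingEdges {V : Type*} [DecidableEq V] (T : Finset (Finset V)) : Finset (Sym2 V) :=
  T.biUnion fun S => S.sym2.filter fun e => ¬ e.IsDiag

def chiF (m r : ℕ) : Fin (r+1) → ℤ := fun i => if (i:ℕ) < 2*m+2 then 1 else -1
def gvalF (c N : ℕ) : Fin N → ℤ := fun a => if (a:ℕ) < 3*c then 1 else -1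

def FF (m r c N : ℕ) (u v : (_ : Fin (r+1)) × Fin N) : ℤ :=
  if u.1 = 0 then (if v.1 = 0 then 1 else gvalF c N u.2)
  else if v.1 = 0 then gvalF c N v.2 else chiF m r u.1 * chiF m r v.1

lemma FF_symm (m r c N : ℕ) : ∀ u v, FF m r c N u v = FF m r c N v u := by
  intro u v
  unfold FF
  split_ifs <;> ring

lemma chi_pm (m r : ℕ) (i : Fin (r+1)) : chiF m r i = 1 ∨ chiF m r i = -1 := by
  unfold chiF; split_ifs <;> simp

lemma gval_pm (c N : ℕ) (a : Fin N) : gvalF c N a = 1 ∨ gvalF c N a = -1 := by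
  unfold gvalF; split_ifs <;> simp

lemma sum_pm (K n : ℕ) : ∑ i ∈ Finset.range n, (if i < K then (1:ℤ) else -1)
    = 2 * min K n - n := by
  induction n with
  | zero => simp
  | succ n ih =>
    rw [Finset.sum_range_succ, ih]
    by_cases h : n < K <;> simp [h, min_def] <;> omega

lemma chi_univ_sum (m : ℕ) : ∑ i : Fin (4*m+2+1), chiF m (4*m+2) i = 1 := by
  have := Fin.sum_univ_eq_sum_range (fun i => if i < 2*m+2 then (1:ℤ) else -1) (4*m+2+1)
  unfold chiF
  rw [this, sum_pm]
  have : min (2*m+2) (4*m+2+1) = 2*m+2 := by omega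
  rw [this]; push_cast; ring

lemma chi_erase_sum (m : ℕ) : ∑ i ∈ Finset.univ.erase (0 : Fin (4*m+2+1)), chiF m (4*m+2) i = 0 := by
  rw [Finset.sum_erase_eq_sub (Finset.mem_univ _), chi_univ_sum]
  have : chiF m (4*m+2) 0 = 1 := by
    unfold chiF
    rw [if_pos]
    simp [Fin.val_zero]
  rw [this]; ring

lemma sq_expand {V : Type*} [DecidableEq V] (s : Finset V) (a : V → ℤ) :
    ∑ u ∈ s, ∑ v ∈ s.erase u, a u * a v = (∑ u ∈ s, a u)^2 - ∑ u ∈ s, (a u)^2 := by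
  have h : ∀ u ∈ s, ∑ v ∈ s.erase u, a u * a v = (∑ v ∈ s, a u * a v) - a u * a u :=
    fun u hu => by rw [Finset.sum_erase_eq_sub hu]
  rw [Finset.sum_congr rfl h, Finset.sum_sub_distrib, ← Finset.sum_mul_sum]
  have : ∑ u ∈ s, (a u)^2 = ∑ u ∈ s, a u * a u := Finset.sum_congr rfl fun u _ => by ring
  rw [this]; ring

lemma tile_sum (m r c N : ℕ) (hr : r = 4*m+2)
    (S : Finset ((_ : Fin (r+1)) × Fin N)) (hcard : S.card = r)
    (hinj : ∀ u ∈ S, ∀ v ∈ S, u ≠ v → u.1 ≠ v.1) :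
    ∑ u ∈ S, ∑ v ∈ S.erase u, FF m r c N u v
      = -(r:ℤ) + ∑ u ∈ S.filter (fun u => u.1 = 0), (2*((r:ℤ)-1) * gvalF c N u.2 + 2) := by
  have hinj' : Set.InjOn Sigma.fst (↑S : Set ((_ : Fin (r+1)) × Fin N)) := by
    intro u hu v hv h
    by_contra hne
    exact hinj u hu v hv hne h
  set A := S.image Sigma.fst with hA
  have hAcard : A.card = r := by rw [hA, Finset.card_image_of_injOn hinj', hcard]
  have hsum_image : ∀ (s : Finset ((_ : Fin (r+1)) × Fin N)), s ⊆ S →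
      ∑ u ∈ s, chiF m r u.1 = ∑ i ∈ s.image Sigma.fst, chiF m r i := by
    intro s hs
    rw [Finset.sum_image (fun x hx y hy h => hinj' (hs hx) (hs hy) h)]
  by_cases h0 : ∃ u ∈ S, u.1 = 0
  · -- Case B
    obtain ⟨u₀, hu₀, hu₀1⟩ := h0
    have huniq : ∀ u ∈ S, u.1 = 0 → u = u₀ := by
      intro u hu h1
      by_contra hne
      exact hinj u hu u₀ hu₀ hne (h1.trans hu₀1.symm)
    have hfilter : S.filter (fun u => u.1 = 0) = {u₀} := by
      ext u
      simp only [Finset.mem_filter, Finset.mem_singleton]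
      constructor
      · rintro ⟨hu, h1⟩; exact huniq u hu h1
      · rintro rfl; exact ⟨hu₀, hu₀1⟩
    set s' := S.erase u₀ with hs'
    have hs'card : s'.card = r - 1 := by rw [hs', Finset.card_erase_of_mem hu₀, hcard]
    have hs'ne0 : ∀ v ∈ s', v.1 ≠ 0 := by
      intro v hv
      obtain ⟨hvne, hvS⟩ := Finset.mem_erase.mp hv
      exact fun h => hvne (huniq v hvS h)
    have h1 : ∑ v ∈ s', FF m r c N u₀ v = (s'.card : ℤ) * gvalF c N u₀.2 := by
      rw [Finset.sum_congr rfl (fun v hv => ?_), Finset.sum_const, nsmul_eq_mul]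
      unfold FF
      rw [if_pos hu₀1, if_neg (hs'ne0 v hv)]
    have h2 : ∀ u ∈ s', ∑ v ∈ S.erase u, FF m r c N u v
        = gvalF c N u₀.2 + ∑ v ∈ s'.erase u, FF m r c N u v := by
      intro u hu
      obtain ⟨hune, huS⟩ := Finset.mem_erase.mp hu
      have hu₀mem : u₀ ∈ S.erase u := Finset.mem_erase.mpr ⟨fun h => hune h.symm, hu₀⟩
      rw [← Finset.add_sum_erase _ _ hu₀mem, Finset.erase_right_comm]
      congr 1
      unfold FF
      rw [if_neg (hs'ne0 u hu), if_pos hu₀1]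
    have h3 : ∑ u ∈ s', ∑ v ∈ s'.erase u, FF m r c N u v
        = (∑ u ∈ s', chiF m r u.1)^2 - (s'.card : ℤ) := by
      have : ∀ u ∈ s', ∑ v ∈ s'.erase u, FF m r c N u v
          = ∑ v ∈ s'.erase u, chiF m r u.1 * chiF m r v.1 := by
        intro u hu
        refine Finset.sum_congr rfl fun v hv => ?_
        have hv' : v ∈ s' := Finset.mem_of_mem_erase hv
        unfold FF
        rw [if_neg (hs'ne0 u hu), if_neg (hs'ne0 v hv')]
      rw [Finset.sum_congr rfl this, sq_expand]
      congr 1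
      rw [Finset.sum_congr rfl (fun u hu => ?_), Finset.sum_const, nsmul_eq_mul, mul_one]
      rcases chi_pm m r u.1 with h | h <;> rw [h] <;> ring
    -- compute the chi sum over s'
    have hchis' : (∑ u ∈ s', chiF m r u.1)^2 = 1 := by
      rw [hsum_image s' (Finset.erase_subset _ _)]
      set A' := s'.image Sigma.fst with hA'
      have hA'card : A'.card = r - 1 := by
        rw [hA', Finset.card_image_of_injOn (hinj'.mono (by
          simp only [Finset.coe_subset]; exact Finset.erase_subset _ _)), hs'card]
      have hA'sub : A' ⊆ Finset.univ.erase (0 : Fin (r+1)) := by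
        intro i hi
        obtain ⟨v, hv, rfl⟩ := Finset.mem_image.mp hi
        exact Finset.mem_erase.mpr ⟨hs'ne0 v hv, Finset.mem_univ _⟩
      have hBcard : (Finset.univ.erase (0 : Fin (r+1))).card = r := by
        rw [Finset.card_erase_of_mem (Finset.mem_univ _), Finset.card_univ, Fintype.card_fin]
        omega
      have hsd : ((Finset.univ.erase (0 : Fin (r+1))) \ A').card = 1 := by
        rw [Finset.card_sdiff_of_subset hA'sub, hBcard, hA'card]
        omega
      obtain ⟨j, hj⟩ := Finset.card_eq_one.mp hsd
      have hjB : j ∈ Finset.univ.erase (0 : Fin (r+1)) := by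
        have : j ∈ (Finset.univ.erase (0 : Fin (r+1))) \ A' := hj ▸ Finset.mem_singleton_self j
        exact (Finset.mem_sdiff.mp this).1
      have hjA' : j ∉ A' := by
        have : j ∈ (Finset.univ.erase (0 : Fin (r+1))) \ A' := hj ▸ Finset.mem_singleton_self j
        exact (Finset.mem_sdiff.mp this).2
      have hA'eq : A' = (Finset.univ.erase (0 : Fin (r+1))).erase j := by
        apply Finset.eq_of_subset_of_card_le
        · intro i hi
          exact Finset.mem_erase.mpr ⟨fun h => hjA' (h ▸ hi), hA'sub hi⟩
        · rw [Finset.card_erase_of_mem hjB, hBcard, hA'card]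
      rw [hA'eq, Finset.sum_erase_eq_sub hjB]
      subst hr
      rw [chi_erase_sum]
      rcases chi_pm m (4*m+2) j with h | h <;> rw [h] <;> ring
    -- assemble case B
    rw [← Finset.add_sum_erase _ _ hu₀, h1, Finset.sum_congr rfl h2,
      Finset.sum_add_distrib, Finset.sum_const, nsmul_eq_mul, h3, hchis', hfilter,
      Finset.sum_singleton]
    have hcast : (s'.card : ℤ) = (r : ℤ) - 1 := by
      rw [hs'card]; omega
    rw [hcast]
    ring
  · -- Case A: no class-0 vertex
    push_neg at h0
    have hfilter : S.filter (fun u => u.1 = 0) = ∅ := by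
      rw [Finset.filter_eq_empty_iff]
      exact h0
    rw [hfilter, Finset.sum_empty, add_zero]
    have hFF : ∀ u ∈ S, ∑ v ∈ S.erase u, FF m r c N u v
        = ∑ v ∈ S.erase u, chiF m r u.1 * chiF m r v.1 := by
      intro u hu
      refine Finset.sum_congr rfl fun v hv => ?_
      unfold FF
      rw [if_neg (h0 u hu), if_neg (h0 v (Finset.mem_of_mem_erase hv))]
    rw [Finset.sum_congr rfl hFF, sq_expand]
    have hchi : ∑ u ∈ S, chiF m r u.1 = 0 := by
      rw [hsum_image S (le_refl _)]
      have hAeq : A = Finset.univ.erase (0 : Fin (r+1)) := by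
        apply Finset.eq_of_subset_of_card_le
        · intro i hi
          obtain ⟨v, hv, rfl⟩ := Finset.mem_image.mp hi
          exact Finset.mem_erase.mpr ⟨h0 v hv, Finset.mem_univ _⟩
        · rw [Finset.card_erase_of_mem (Finset.mem_univ _), Finset.card_univ,
            Fintype.card_fin, hAcard]
          omega
      rw [← hA, hAeq]
      subst hr
      exact chi_erase_sum m
    rw [hchi]
    have hsq : ∑ u ∈ S, (chiF m r u.1)^2 = (S.card : ℤ) := by
      rw [Finset.sum_congr rfl (fun u hu => ?_), Finset.sum_const, nsmul_eq_mul, mul_one]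
      rcases chi_pm m r u.1 with h | h <;> rw [h] <;> ring
    rw [hsq, hcard]
    ring

lemma two_mul_sum_sym2 {V : Type*} [DecidableEq V] (F : V → V → ℤ)
    (hF : ∀ u v, F u v = F v u) (S : Finset V) :
    2 * ∑ e ∈ S.sym2.filter (fun e => ¬ e.IsDiag), Sym2.lift ⟨F, hF⟩ e
      = ∑ u ∈ S, ∑ v ∈ S.erase u, F u v := by
  induction S using Finset.induction with
  | empty => simp
  | @insert a s ha ih =>
    have himg : ((insert a s).image fun b => s(a, b)).filter (fun e => ¬ e.IsDiag)
        = s.image fun b => s(a, b) := by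
      ext e
      simp only [Finset.mem_filter, Finset.mem_image, Finset.mem_insert]
      constructor
      · rintro ⟨⟨b, hb | hb, rfl⟩, hd⟩
        · exact absurd (by simp [hb]) hd
        · exact ⟨b, hb, rfl⟩
      · rintro ⟨b, hb, rfl⟩
        refine ⟨⟨b, Or.inr hb, rfl⟩, ?_⟩
        simp only [Sym2.isDiag_iff_proj_eq]
        rintro rfl; exact ha hb
    have hdisj : Disjoint ((s.image fun b => s(a, b)))
        (s.sym2.filter (fun e => ¬ e.IsDiag)) := by
      rw [Finset.disjoint_left]
      intro e he he'
      obtain ⟨b, hb, rfl⟩ := Finset.mem_image.mp he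
      have := Finset.mem_of_mem_filter _ he'
      rw [Finset.mk_mem_sym2_iff] at this
      exact ha this.1
    have hinj : ∀ x ∈ s, ∀ y ∈ s, s(a, x) = s(a, y) → x = y := by
      intro x hx y hy h
      replace h := (Sym2.mk_eq_mk_iff (p := (a, x)) (q := (a, y))).mp h
      rcases h with h | h
      · exact (Prod.ext_iff.mp h).2
      · obtain ⟨h1, h2⟩ := Prod.ext_iff.mp h
        simp only at h1 h2
        subst h1; exact absurd hy ha
    rw [Finset.sym2_insert, Finset.filter_union, himg, Finset.sum_union hdisj,
      Finset.sum_image hinj]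
    simp only [Sym2.lift_mk]
    rw [Finset.sum_insert ha, Finset.erase_insert ha]
    have hrw : ∀ u ∈ s, ∑ v ∈ (insert a s).erase u, F u v
        = F u a + ∑ v ∈ s.erase u, F u v := by
      intro u hu
      rw [Finset.erase_insert_of_ne (by rintro rfl; exact ha hu)]
      rw [Finset.sum_insert (by simp [ha, Finset.mem_erase])]
    rw [Finset.sum_congr rfl hrw, Finset.sum_add_distrib]
    have h2 : ∑ u ∈ s, F u a = ∑ u ∈ s, F a u := Finset.sum_congr rfl fun u _ => hF u a
    rw [h2, mul_add, ih]; ring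


/-- Extremal example for `r ≡ 2 (mod 4)`: the complete balanced `(r+1)`-partite graph on
`n` vertices admits a `±1`-labelling for which every perfect `K_r`-tiling has discrepancy `0`. -/
theorem extremal_example_r_eq_two_mod_four (m r n : ℕ) (hm : 1 ≤ m) (hr : r = 4 * m + 2)
    (hn : 2 * r * (r + 1) ∣ n) :
    ∃ f : Sym2 ((_ : Fin (r + 1)) × Fin (n / (r + 1))) → ℤ,
      (∀ e ∈ (SimpleGraph.completeMultipartiteGraph
          fun _ : Fin (r + 1) => Fin (n / (r + 1))).edgeSet, f e = 1 ∨ f e = -1) ∧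
      ∀ T : Finset (Finset ((_ : Fin (r + 1)) × Fin (n / (r + 1)))),
        IsPerfectKTiling
          (SimpleGraph.completeMultipartiteGraph fun _ : Fin (r + 1) => Fin (n / (r + 1))) r T →
        ∑ e ∈ tilingEdges T, f e = 0 := by
  obtain ⟨k, hk⟩ := hn
  set N := n / (r + 1) with hNdef
  have hNval : N = 2 * r * k := by
    rw [hNdef, hk, show 2 * r * (r+1) * k = (r+1) * (2*r*k) by ring]
    exact Nat.mul_div_cancel_left _ (Nat.succ_pos r)
  have hn' : n = (r+1) * N := by rw [hNval, hk]; ring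
  set c := (2*m+1)*k with hc
  have hN4 : N = 4 * c := by rw [hNval, hc, hr]; ring
  refine ⟨Sym2.lift ⟨FF m r c N, FF_symm m r c N⟩, ?_, ?_⟩
  · intro e
    induction e using Sym2.ind with
    | _ u v =>
      intro he
      rw [SimpleGraph.mem_edgeSet] at he
      have hadj : u.1 ≠ v.1 := by simpa using he
      rw [Sym2.lift_mk]
      show FF m r c N u v = 1 ∨ FF m r c N u v = -1
      unfold FF
      split_ifs with h1 h2 h3
      · exact absurd (h1.trans h2.symm) hadj
      · exact gval_pm c N u.2
      · exact gval_pm c N v.2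
      · rcases chi_pm m r u.1 with h | h <;> rcases chi_pm m r v.1 with h' | h' <;>
          rw [h, h'] <;> norm_num
  · intro T hT
    obtain ⟨hclique, hdisj, hcover⟩ := hT
    have hPD : (↑T : Set (Finset ((_ : Fin (r+1)) × Fin N))).PairwiseDisjoint
        (fun S => S.sym2.filter fun e => ¬ e.IsDiag) := by
      intro S hS S' hS' hne
      have hDS : Disjoint S S' := hdisj hS hS' hne
      rw [Function.onFun, Finset.disjoint_left]
      intro e he he'
      revert he he'
      induction e using Sym2.ind with
      | _ u v =>
        intro he he'
        have h1 := (Finset.mk_mem_sym2_iff.mp (Finset.mem_of_mem_filter _ he)).1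
        have h2 := (Finset.mk_mem_sym2_iff.mp (Finset.mem_of_mem_filter _ he')).1
        exact Finset.disjoint_left.mp hDS h1 h2
    have key : 2 * ∑ e ∈ tilingEdges T, Sym2.lift ⟨FF m r c N, FF_symm m r c N⟩ e = 0 := by
      rw [tilingEdges, Finset.sum_biUnion hPD, Finset.mul_sum]
      have htile : ∀ S ∈ T,
          2 * ∑ e ∈ S.sym2.filter (fun e => ¬ e.IsDiag),
              Sym2.lift ⟨FF m r c N, FF_symm m r c N⟩ e
          = -(r:ℤ) + ∑ u ∈ S.filter (fun u => u.1 = 0), (2*((r:ℤ)-1) * gvalF c N u.2 + 2) := by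
        intro S hS
        rw [two_mul_sum_sym2]
        apply tile_sum m r c N hr S (hclique S hS).2
        intro u hu v hv hne
        have := (hclique S hS).1 hu hv hne
        simpa using this
      rw [Finset.sum_congr rfl htile, Finset.sum_add_distrib, Finset.sum_const,
        nsmul_eq_mul]
      have hfil : ∑ S ∈ T, ∑ u ∈ S.filter (fun u => u.1 = 0),
            (2*((r:ℤ)-1) * gvalF c N u.2 + 2)
          = ∑ u ∈ Finset.univ.filter (fun u : (_ : Fin (r+1)) × Fin N => u.1 = 0),
            (2*((r:ℤ)-1) * gvalF c N u.2 + 2) := by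
        rw [← Finset.sum_biUnion (fun S hS S' hS' hne =>
          Disjoint.mono (Finset.filter_subset _ _) (Finset.filter_subset _ _)
            (hdisj hS hS' hne))]
        congr 1
        ext u
        simp only [Finset.mem_biUnion, Finset.mem_filter, Finset.mem_univ, true_and]
        constructor
        · rintro ⟨S, hS, hu⟩; exact hu.2
        · intro h0
          obtain ⟨S, hS, hu⟩ := hcover u
          exact ⟨S, hS, hu, h0⟩
      have hvert : ∑ u ∈ Finset.univ.filter (fun u : (_ : Fin (r+1)) × Fin N => u.1 = 0),
            (2*((r:ℤ)-1) * gvalF c N u.2 + 2)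
          = ∑ a : Fin N, (2*((r:ℤ)-1) * gvalF c N a + 2) := by
        rw [Finset.sum_filter, ← Finset.univ_sigma_univ, Finset.sum_sigma]
        have hstep : ∀ i : Fin (r+1), ∑ a : Fin N,
            (if (⟨i, a⟩ : (_ : Fin (r+1)) × Fin N).1 = 0
              then 2*((r:ℤ)-1) * gvalF c N (⟨i, a⟩ : (_ : Fin (r+1)) × Fin N).2 + 2 else 0)
            = if i = 0 then ∑ a : Fin N, (2*((r:ℤ)-1) * gvalF c N a + 2) else 0 := by
          intro i
          by_cases h : i = 0 <;> simp [h]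
        rw [Finset.sum_congr rfl (fun i _ => hstep i), Finset.sum_ite_eq' _ _
          (fun _ => ∑ a : Fin N, (2*((r:ℤ)-1) * gvalF c N a + 2))]
        simp
      have hgsum : ∑ a : Fin N, gvalF c N a = 2*(c:ℤ) := by
        unfold gvalF
        rw [Fin.sum_univ_eq_sum_range (fun a => if a < 3*c then (1:ℤ) else -1) N, sum_pm]
        have hmin : min (3*c) N = 3*c := by omega
        rw [hmin, hN4]; push_cast; ring
      have hTcard : r * T.card = (r+1) * N := by
        have hbU : T.biUnion id = Finset.univ := by
          ext v
          simp only [Finset.mem_biUnion, Finset.mem_univ, iff_true, id]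
          exact hcover v
        have hcb : (T.biUnion id).card = ∑ S ∈ T, S.card :=
          Finset.card_biUnion (fun S hS S' hS' hne => hdisj hS hS' hne)
        rw [hbU, Finset.card_univ] at hcb
        have hSc : ∀ S ∈ T, S.card = r := fun S hS => (hclique S hS).2
        rw [Finset.sum_congr rfl hSc, Finset.sum_const, smul_eq_mul] at hcb
        have hcardV : Fintype.card ((_ : Fin (r+1)) × Fin N) = (r+1) * N := by
          rw [Fintype.card_sigma]
          simp [Finset.sum_const, Fintype.card_fin, smul_eq_mul]
        rw [hcardV] at hcb
        rw [hcb]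
        exact Nat.mul_comm _ _
      rw [hfil, hvert, Finset.sum_add_distrib, ← Finset.mul_sum, hgsum,
        Finset.sum_const, Finset.card_univ, Fintype.card_fin, nsmul_eq_mul]
      have hTZ : (r:ℤ) * (T.card : ℤ) = ((r:ℤ)+1) * (N:ℤ) := by exact_mod_cast hTcard
      have hNZ : (N:ℤ) = 4*(c:ℤ) := by exact_mod_cast hN4
      linear_combination (-1 : ℤ) * hTZ + (1 - (r:ℤ)) * hNZ
    linarith
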